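/- Let G ∈ ℝ^{m×m} be symmetric positive definite and A ∈ ℝ^{m×m} skew-symmetric. Then det(G + A) ≥ det(G). -/

import Mathlib

open Matrix

/-- For a real skew-symmetric matrix `S`, `det (1 + S) > 0`. -/
lemma det_one_add_skew_pos {n : ℕ} (S : Matrix (Fin n) (Fin n) ℝ)
    (hS : Sᵀ = -S) : 0 < (1 + S).det := by
  have key : ∀ t : ℝ, (1 + t • S).det ≠ 0 := by
    intro t h
    obtain ⟨v, hv, hmv⟩ := (Matrix.exists_mulVec_eq_zero_iff).mpr h
    have hskew : v ⬝ᵥ (S *ᵥ v) = 0 := by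
      have h1 : v ⬝ᵥ (S *ᵥ v) = (Sᵀ *ᵥ v) ⬝ᵥ v := by
        rw [Matrix.dotProduct_mulVec, ← Matrix.vecMul_transpose, Matrix.transpose_transpose]
      rw [hS, Matrix.neg_mulVec, neg_dotProduct] at h1
      have h2 := dotProduct_comm (S *ᵥ v) v
      linarith
    have h0 : v ⬝ᵥ ((1 + t • S) *ᵥ v) = 0 := by rw [hmv, dotProduct_zero]
    rw [Matrix.add_mulVec, Matrix.one_mulVec, Matrix.smul_mulVec,
      dotProduct_add, dotProduct_smul, hskew] at h0
    simp only [smul_eq_mul, mul_zero, add_zero] at h0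
    exact hv (dotProduct_self_eq_zero.mp h0)
  have hc : Continuous fun t : ℝ => (1 + t • S).det := by
    apply Continuous.matrix_det
    fun_prop
  by_contra hle
  push_neg at hle
  have hmem : (0 : ℝ) ∈ Set.Icc ((fun t : ℝ => (1 + t • S).det) 1)
      ((fun t : ℝ => (1 + t • S).det) 0) := by
    constructor
    · simpa using hle
    · simp
  obtain ⟨t, _, ht⟩ := intermediate_value_Icc' (by norm_num : (0:ℝ) ≤ 1)
    hc.continuousOn hmem
  exact key t ht

/-- For a real positive semidefinite matrix `M`, `det (1 + M) ≥ 1`. -/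
lemma det_one_add_posSemidef {n : ℕ} {M : Matrix (Fin n) (Fin n) ℝ}
    (hM : M.PosSemidef) : 1 ≤ (1 + M).det := by
  have hH := hM.1
  have hspec := hH.spectral_theorem
  set U : Matrix (Fin n) (Fin n) ℝ := (hH.eigenvectorUnitary : Matrix (Fin n) (Fin n) ℝ) with hU
  have hUU : U * star U = 1 := Matrix.mem_unitaryGroup_iff.mp hH.eigenvectorUnitary.2
  have h1 : (1 : Matrix (Fin n) (Fin n) ℝ) + M
      = U * (1 + diagonal (RCLike.ofReal ∘ hH.eigenvalues)) * star U := by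
    rw [mul_add, add_mul, mul_one, hUU]
    conv_lhs => rw [hspec]
    rw [Unitary.conjStarAlgAut_apply]
  rw [h1, Matrix.det_mul, Matrix.det_mul]
  have hUdet : U.det * (star U).det = 1 := by
    rw [← Matrix.det_mul, hUU, Matrix.det_one]
  have hDdet : ((1 + diagonal (RCLike.ofReal ∘ hH.eigenvalues) : Matrix (Fin n) (Fin n) ℝ)).det
      = ∏ i, (1 + hH.eigenvalues i) := by
    rw [← Matrix.diagonal_one, Matrix.diagonal_add, Matrix.det_diagonal]
    simp [RCLike.ofReal_real_eq_id]
  have hkey : U.det * ((1 + diagonal (RCLike.ofReal ∘ hH.eigenvalues) : Matrix (Fin n) (Fin n) ℝ)).det * (star U).det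
      = ∏ i, (1 + hH.eigenvalues i) := by
    rw [mul_right_comm, hUdet, one_mul, hDdet]
  rw [hkey]
  calc (1:ℝ) = ∏ _i : Fin n, (1:ℝ) := by simp
    _ ≤ ∏ i, (1 + hH.eigenvalues i) := by
        apply Finset.prod_le_prod
        · intro i _; norm_num
        · intro i _; linarith [hM.eigenvalues_nonneg i]

/-- If `G` is symmetric positive definite and `A` is skew-symmetric, then
`det(G + A) ≥ det(G)`. -/
theorem det_add_skew_ge {m : ℕ} (G A : Matrix (Fin m) (Fin m) ℝ)
    (hG : G.PosDef) (hA : Aᵀ = -A) : G.det ≤ (G + A).det := by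
  have hGps := hG.posSemidef
  open scoped MatrixOrder in
  set R := CFC.sqrt G with hRdef
  open scoped MatrixOrder in
  have hRR : R * R = G := CFC.sqrt_mul_sqrt_self G hGps.nonneg
  have hRherm : Rᵀ = R := by
    open scoped MatrixOrder in
    have h : R.PosSemidef := (CFC.sqrt_nonneg G).posSemidef
    replace h := h.1
    rwa [Matrix.IsHermitian, Matrix.conjTranspose_eq_transpose_of_trivial] at h
  have hGdet : 0 < G.det := hG.det_pos
  have hRdet : R.det ≠ 0 := by
    intro h
    rw [← hRR, Matrix.det_mul, h, mul_zero] at hGdet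
    exact lt_irrefl _ hGdet
  have hRdetG : R.det * R.det = G.det := by rw [← Matrix.det_mul, hRR]
  have hRunit : IsUnit R.det := isUnit_iff_ne_zero.mpr hRdet
  have hRinv : R * R⁻¹ = 1 := Matrix.mul_nonsing_inv R hRunit
  have hRinv' : R⁻¹ * R = 1 := Matrix.nonsing_inv_mul R hRunit
  set S := R⁻¹ * A * R⁻¹ with hSdef
  have hSskew : Sᵀ = -S := by
    rw [hSdef, Matrix.transpose_mul, Matrix.transpose_mul, Matrix.transpose_nonsing_inv,
      hRherm, hA]
    simp [Matrix.neg_mul, Matrix.mul_neg, mul_assoc]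
  have hdecomp : G + A = R * (1 + S) * R := by
    rw [hSdef, mul_add, add_mul, mul_one, hRR]
    congr 1
    rw [← mul_assoc, ← mul_assoc, hRinv, one_mul, mul_assoc, hRinv', mul_one]
  have hdet1S : 0 < (1 + S).det := det_one_add_skew_pos S hSskew
  have hexpand : (1 + S) * (1 + S)ᵀ = 1 + S * Sᵀ := by
    rw [Matrix.transpose_add, Matrix.transpose_one, hSskew]
    noncomm_ring
  have hsq : (1 + S).det * (1 + S).det = (1 + S * Sᵀ).det := by
    rw [← hexpand, Matrix.det_mul, Matrix.det_transpose]
  have hpsd : (S * Sᵀ).PosSemidef := by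
    have h := Matrix.posSemidef_self_mul_conjTranspose S
    rwa [Matrix.conjTranspose_eq_transpose_of_trivial] at h
  have hge1 : 1 ≤ (1 + S * Sᵀ).det := det_one_add_posSemidef hpsd
  have hd1 : 1 ≤ (1 + S).det := by nlinarith
  calc G.det = G.det * 1 := (mul_one _).symm
    _ ≤ G.det * (1 + S).det := by nlinarith
    _ = R.det * (1 + S).det * R.det := by rw [← hRdetG]; ring
    _ = (G + A).det := by rw [hdecomp, Matrix.det_mul, Matrix.det_mul]
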